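/- Let ρ = p/q with gcd(p,q) = 1 and N ∣ q, and let Λ be a bi-zero set of μ_{ρ,N}. With m₀ as in the structure lemma and Q = { q^m a : m ≥ 0, a ∈ ℤ, N ∤ a }, we have (Λ−Λ)\{0} ⊆ ρ^{-m₀} N^{-1} Q ⊆ Z(μ̂_{ρ,N}). -/

import Mathlib

open Set

/-- The zero set `Z(μ̂_{ρ,N}) = { (q/p)^k (a/N) : k ≥ 1, a ∈ ℤ, N ∤ a }`. -/
def Zset (ρ : ℝ) (N : ℕ) : Set ℝ :=
  {x | ∃ k : ℕ, 1 ≤ k ∧ ∃ a : ℤ, ¬ (N : ℤ) ∣ a ∧ x = (ρ ^ k)⁻¹ * ((a : ℝ) / N)}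

/-- `Λ` is a bi-zero set of `μ_{ρ,N}`: `0 ∈ Λ` and `(Λ − Λ) \ {0} ⊆ Z(μ̂_{ρ,N})`. -/
def IsBiZero (ρ : ℝ) (N : ℕ) (Λ : Set ℝ) : Prop :=
  0 ∈ Λ ∧ ∀ l ∈ Λ, ∀ l' ∈ Λ, l ≠ l' → l - l' ∈ Zset ρ N

theorem stmt_14 (p q : ℕ) (hp : 0 < p) (hpq : p < q) (hcop : Nat.Coprime p q)
    (N : ℕ) (hN : 1 < N) (hNq : N ∣ q) (ρ : ℝ) (hρ : ρ = (p : ℝ) / q)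
    (Λ : Set ℝ) (hbz : IsBiZero ρ N Λ) (m₀ : ℕ) (hm₀ : 1 ≤ m₀)
    (hstruct : ∀ l ∈ Λ, l ≠ 0 → ∃ (m : ℕ) (c : ℤ), m₀ ≤ m ∧ ¬ (N : ℤ) ∣ c ∧
      l = (q : ℝ) ^ m * (c : ℝ) / ((p : ℝ) ^ m₀ * N)) :
    (∀ x, (∃ l ∈ Λ, ∃ l' ∈ Λ, l ≠ l' ∧ x = l - l') →
        x ∈ (fun y => (ρ ^ m₀)⁻¹ * (N : ℝ)⁻¹ * y) ''
          {y : ℝ | ∃ (m : ℕ) (a : ℤ), ¬ (N : ℤ) ∣ a ∧ y = (q : ℝ) ^ m * a}) ∧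
    ((fun y => (ρ ^ m₀)⁻¹ * (N : ℝ)⁻¹ * y) ''
        {y : ℝ | ∃ (m : ℕ) (a : ℤ), ¬ (N : ℤ) ∣ a ∧ y = (q : ℝ) ^ m * a}
      ⊆ Zset ρ N) := by
  
  subst hρ
  have hq : 0 < q := hp.trans hpq
  have hp0 : (p : ℝ) ≠ 0 := Nat.cast_ne_zero.mpr hp.ne'
  have hq0 : (q : ℝ) ≠ 0 := Nat.cast_ne_zero.mpr hq.ne'
  have hN0 : (N : ℝ) ≠ 0 := Nat.cast_ne_zero.mpr (by omega)
  have hNp : Nat.Coprime N p := Nat.Coprime.coprime_dvd_left hNq hcop.symm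
  have hNpZ : IsCoprime (N : ℤ) (p : ℤ) := by
    rw [Int.isCoprime_iff_gcd_eq_one, Int.gcd_natCast_natCast]; exact hNp
  have hpqZ : IsCoprime (p : ℤ) (q : ℤ) := by
    rw [Int.isCoprime_iff_gcd_eq_one, Int.gcd_natCast_natCast]; exact hcop
  constructor
  · -- Part 1
    intro x ⟨l, hl, l', hl', hne, hxe⟩
    -- structural integrality: p^m₀ * N * l ∈ q^m₀ * ℤ for every l ∈ Λ
    have hsub : ∀ l ∈ Λ, ∃ t : ℤ, (p : ℝ) ^ m₀ * N * l = (q : ℝ) ^ m₀ * t := by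
      intro l hl
      rcases eq_or_ne l 0 with rfl | hl0
      · exact ⟨0, by simp⟩
      · obtain ⟨m, c, hm, hc, hleq⟩ := hstruct l hl hl0
        obtain ⟨e, rfl⟩ := Nat.exists_eq_add_of_le hm
        refine ⟨(q : ℤ) ^ e * c, ?_⟩
        rw [hleq]
        push_cast
        field_simp
        ring
    obtain ⟨t1, ht1⟩ := hsub l hl
    obtain ⟨t2, ht2⟩ := hsub l' hl'
    have ht : (p : ℝ) ^ m₀ * N * x = (q : ℝ) ^ m₀ * ((t1 - t2 : ℤ) : ℝ) := by
      rw [hxe]; push_cast; rw [mul_sub]; rw [ht1, ht2]; ring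
    set t : ℤ := t1 - t2 with htdef
    obtain ⟨k, hk, b, hNb, hxb⟩ := hbz.2 l hl l' hl' hne
    rw [← hxe] at hxb
    -- key integer identity
    have hZR : (p : ℝ) ^ m₀ * q ^ k * b = (q : ℝ) ^ m₀ * t * p ^ k := by
      rw [hxb] at ht
      rw [div_pow, inv_div] at ht
      field_simp at ht
      exact mul_right_cancel₀ hN0 (by linear_combination (N : ℝ) * ht)
    have hZ : (p : ℤ) ^ m₀ * q ^ k * b = (q : ℤ) ^ m₀ * t * p ^ k := by
      exact_mod_cast hZR
    rcases le_or_gt m₀ k with hkm | hkm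
    · obtain ⟨d, rfl⟩ := Nat.exists_eq_add_of_le hkm
      have hcan : (q : ℤ) ^ d * b = t * p ^ d := by
        have hnz : ((p : ℤ) ^ m₀ * q ^ m₀) ≠ 0 := by positivity
        refine mul_left_cancel₀ hnz ?_
        linear_combination hZ
      have hdvd : (p : ℤ) ^ d ∣ b := by
        have : (p : ℤ) ^ d ∣ (q : ℤ) ^ d * b := ⟨t, by linarith [hcan]⟩
        exact (hpqZ.pow).dvd_of_dvd_mul_left this
      obtain ⟨b', rfl⟩ := hdvd
      refine ⟨(q : ℝ) ^ d * b', ⟨d, b', ?_, rfl⟩, ?_⟩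
      · intro h
        exact hNb (Dvd.dvd.mul_left h _)
      · rw [hxb]
        push_cast
        simp only [div_pow, inv_div]
        field_simp
        ring
    · exfalso
      obtain ⟨d, rfl⟩ := Nat.exists_eq_add_of_le hkm.le
      have hd : d ≠ 0 := by omega
      have hcan : (p : ℤ) ^ d * b = (q : ℤ) ^ d * t := by
        have hnz : ((p : ℤ) ^ k * q ^ k) ≠ 0 := by positivity
        refine mul_left_cancel₀ hnz ?_
        linear_combination hZ
      have hNd : (N : ℤ) ∣ (q : ℤ) ^ d := by
        exact dvd_pow (Int.natCast_dvd_natCast.mpr hNq) hd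
      have : (N : ℤ) ∣ (p : ℤ) ^ d * b := hcan ▸ hNd.mul_right t
      exact hNb ((hNpZ.pow_right).dvd_of_dvd_mul_left this)
  · -- Part 2
    rintro x ⟨y, ⟨m, a, hNa, rfl⟩, rfl⟩
    refine ⟨m₀ + m, by omega, (p : ℤ) ^ m * a, ?_, ?_⟩
    · intro h
      exact hNa ((hNpZ.pow_right).dvd_of_dvd_mul_left h)
    · push_cast
      rw [div_pow, div_pow, inv_div, inv_div]
      field_simp
      ring
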